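/- For any odd integer n ≥ 1, ∑_{ℓ=1}^{(n-1)/2} ( ⌊√(2ℓ·n)⌋ − ⌊√((2ℓ−1)·n)⌋ ) = (n−1)/2. -/

import Mathlib

open Finset

lemma ceil_le_iff' {n : ℕ} (hn : 0 < n) (a m : ℕ) :
    (a + n - 1) / n ≤ m ↔ a ≤ m * n := by
  rw [Nat.div_le_iff_le_mul_add_pred hn, Nat.add_sub_assoc hn,
    Nat.add_le_add_iff_right, Nat.mul_comm]

lemma lt_ceil_iff' {n : ℕ} (hn : 0 < n) (a m : ℕ) :
    m < (a + n - 1) / n ↔ m * n < a := by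
  rw [← not_le, ← not_le, ceil_le_iff' hn]

lemma ceil_reflect' {n k : ℕ} (hn : 0 < n) (hk : k ≤ n) :
    ((n - k) * (n - k) + n - 1) / n + 2 * k = (k * k + n - 1) / n + n := by
  have h : (n - k) * (n - k) + n - 1 + 2 * k * n = k * k + n - 1 + n * n := by
    zify [hk, show 1 ≤ (n - k) * (n - k) + n by omega, show 1 ≤ k * k + n by omega]
    ring
  calc ((n - k) * (n - k) + n - 1) / n + 2 * k
      = ((n - k) * (n - k) + n - 1 + 2 * k * n) / n := by
        rw [Nat.add_mul_div_right _ _ hn]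
    _ = (k * k + n - 1 + n * n) / n := by rw [h]
    _ = (k * k + n - 1) / n + n := by rw [Nat.add_mul_div_right _ _ hn]

lemma sqrt_as_card' {n : ℕ} (m : ℕ) (hm : Nat.sqrt m ≤ n - 1) :
    Nat.sqrt m = ((Finset.Icc 1 (n-1)).filter (fun k => k * k ≤ m)).card := by
  have he : (Finset.Icc 1 (n-1)).filter (fun k => k * k ≤ m) = Finset.Icc 1 (Nat.sqrt m) := by
    ext k
    simp only [mem_filter, mem_Icc]
    constructor
    · rintro ⟨⟨ha, _⟩, hb⟩
      exact ⟨ha, Nat.le_sqrt'.mpr (by rwa [pow_two])⟩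
    · rintro ⟨ha, hb⟩
      exact ⟨⟨ha, le_trans hb hm⟩, by have := Nat.le_sqrt'.mp hb; rwa [pow_two] at this⟩
  rw [he, Nat.card_Icc]
  omega

theorem sum_floor_sqrt_differences (n : ℕ) (hn : Odd n) (h1 : 1 ≤ n) :
    ∑ ℓ ∈ Finset.Icc 1 ((n - 1) / 2),
        (⌊Real.sqrt (2 * ℓ * n)⌋ - ⌊Real.sqrt ((2 * ℓ - 1) * n)⌋) = ((n : ℤ) - 1) / 2 := by
  have hn0 : 0 < n := h1
  have hnodd : n % 2 = 1 := Nat.odd_iff.mp hn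
  set N := (n - 1) / 2 with hN
  -- Step 1: each summand is a cardinality
  have hterm : ∀ ℓ ∈ Finset.Icc 1 N,
      (⌊Real.sqrt (2 * ℓ * n)⌋ - ⌊Real.sqrt ((2 * ℓ - 1) * n)⌋ : ℤ)
        = (((Finset.Icc 1 (n-1)).filter
            (fun k => (2 * ℓ - 1) * n < k * k ∧ k * k ≤ 2 * ℓ * n)).card : ℤ) := by
    intro ℓ hℓ
    rw [mem_Icc] at hℓ
    obtain ⟨hℓ1, hℓ2⟩ := hℓ
    have hcast1 : (2 * (ℓ:ℝ) * n) = ((2 * ℓ * n : ℕ) : ℝ) := by push_cast; ring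
    have hcast2 : ((2 * (ℓ:ℝ) - 1) * n) = (((2 * ℓ - 1) * n : ℕ) : ℝ) := by
      have h' : (1:ℕ) ≤ 2 * ℓ := by omega
      push_cast [h']; ring
    rw [hcast1, hcast2, Real.floor_real_sqrt_eq_nat_sqrt, Real.floor_real_sqrt_eq_nat_sqrt]
    have hsb : Nat.sqrt (2 * ℓ * n) ≤ n - 1 := by
      have hlt : 2 * ℓ < n := by omega
      have h2 : 2 * ℓ * n < n ^ 2 := by
        rw [pow_two]; exact (Nat.mul_lt_mul_right hn0).mpr hlt
      have := Nat.sqrt_lt'.mpr h2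
      omega
    have hsa : Nat.sqrt ((2 * ℓ - 1) * n) ≤ n - 1 := by
      have h' : (2 * ℓ - 1) * n ≤ 2 * ℓ * n := Nat.mul_le_mul_right _ (by omega)
      exact le_trans (Nat.sqrt_le_sqrt h') hsb
    rw [sqrt_as_card' _ hsb, sqrt_as_card' _ hsa]
    have hsub : (Finset.Icc 1 (n-1)).filter (fun k => k * k ≤ (2 * ℓ - 1) * n)
        ⊆ (Finset.Icc 1 (n-1)).filter (fun k => k * k ≤ 2 * ℓ * n) := by
      intro k hk
      simp only [mem_filter, mem_Icc] at hk ⊢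
      exact ⟨hk.1, le_trans hk.2 (Nat.mul_le_mul_right _ (by omega))⟩
    have hdiff : (Finset.Icc 1 (n-1)).filter
            (fun k => (2 * ℓ - 1) * n < k * k ∧ k * k ≤ 2 * ℓ * n)
        = (Finset.Icc 1 (n-1)).filter (fun k => k * k ≤ 2 * ℓ * n) \
          (Finset.Icc 1 (n-1)).filter (fun k => k * k ≤ (2 * ℓ - 1) * n) := by
      ext k
      simp only [mem_filter, mem_sdiff, not_and, not_le, mem_Icc]
      constructor
      · rintro ⟨ha, hb, hc'⟩; exact ⟨⟨ha, hc'⟩, fun _ => hb⟩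
      · rintro ⟨⟨ha, hc'⟩, hb⟩; exact ⟨ha, hb ha, hc'⟩
    rw [hdiff, Finset.card_sdiff_of_subset hsub]
    have := Finset.card_le_card hsub
    omega
  rw [Finset.sum_congr rfl hterm, ← Nat.cast_sum]
  -- Step 2: swap to counting over k
  have hswap : ∑ ℓ ∈ Finset.Icc 1 N,
      ((Finset.Icc 1 (n-1)).filter
        (fun k => (2 * ℓ - 1) * n < k * k ∧ k * k ≤ 2 * ℓ * n)).card
      = ((Finset.Icc 1 (n-1)).filter (fun k => Even ((k * k + n - 1) / n))).card := by
    simp only [Finset.card_filter]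
    rw [Finset.sum_comm]
    apply Finset.sum_congr rfl
    intro k hk
    rw [mem_Icc] at hk
    have hck_le : (k * k + n - 1) / n ≤ n - 1 := by
      rw [ceil_le_iff' hn0]
      calc k * k ≤ (n-1) * (n-1) := Nat.mul_le_mul hk.2 hk.2
        _ ≤ (n-1) * n := Nat.mul_le_mul_left _ (by omega)
    have hck_pos : 1 ≤ (k * k + n - 1) / n := by
      have hk1 : 1 ≤ k * k := Nat.one_le_iff_ne_zero.mpr
        (Nat.mul_ne_zero (by omega) (by omega))
      show 0 < (k * k + n - 1) / n
      rw [lt_ceil_iff' hn0, Nat.zero_mul]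
      exact hk1
    have hcond : ∀ ℓ : ℕ, ((2 * ℓ - 1) * n < k * k ∧ k * k ≤ 2 * ℓ * n)
        ↔ (k * k + n - 1) / n = 2 * ℓ := by
      intro ℓ
      constructor
      · rintro ⟨ha, hb⟩
        have h1' := (lt_ceil_iff' hn0 (k*k) (2*ℓ-1)).mpr ha
        have h2' := (ceil_le_iff' hn0 (k*k) (2*ℓ)).mpr hb
        omega
      · intro h
        exact ⟨(lt_ceil_iff' hn0 (k*k) (2*ℓ-1)).mp (by omega),
               (ceil_le_iff' hn0 (k*k) (2*ℓ)).mp (by omega)⟩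
    rw [Finset.sum_congr rfl (fun ℓ _ => if_congr (hcond ℓ) rfl rfl)]
    by_cases hE : Even ((k * k + n - 1) / n)
    · obtain ⟨t, ht⟩ := hE
      rw [Finset.sum_congr rfl
        (fun ℓ _ => if_congr (show (k * k + n - 1) / n = 2 * ℓ ↔ ℓ = t by omega) rfl rfl)]
      rw [Finset.sum_ite_eq' (Finset.Icc 1 N) t (fun _ => 1)]
      rw [if_pos (by rw [mem_Icc]; omega), if_pos ⟨t, ht⟩]
    · rw [if_neg hE]
      apply Finset.sum_eq_zero
      intro ℓ _
      rw [if_neg]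
      intro h
      exact hE ⟨ℓ, by omega⟩
  rw [hswap]
  -- Step 3: the count is (n-1)/2
  have hEO : ((Finset.Icc 1 (n-1)).filter (fun k => Even ((k * k + n - 1) / n))).card
      + ((Finset.Icc 1 (n-1)).filter (fun k => ¬ Even ((k * k + n - 1) / n))).card
      = n - 1 := by
    rw [Finset.card_filter_add_card_filter_not, Nat.card_Icc]
    omega
  have hbij : ((Finset.Icc 1 (n-1)).filter (fun k => Even ((k * k + n - 1) / n))).card
      = ((Finset.Icc 1 (n-1)).filter (fun k => ¬ Even ((k * k + n - 1) / n))).card := by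
    have hrefl : ∀ k, 1 ≤ k → k ≤ n - 1 →
        (Even ((k * k + n - 1) / n) ↔ ¬ Even (((n - k) * (n - k) + n - 1) / n)) := by
      intro k hk1 hk2
      have := ceil_reflect' hn0 (show k ≤ n by omega)
      simp only [Nat.even_iff]
      omega
    apply Finset.card_bij' (fun k _ => n - k) (fun k _ => n - k)
    · intro k hk
      simp only [mem_filter, mem_Icc] at hk ⊢
      exact ⟨⟨by omega, by omega⟩, (hrefl k hk.1.1 hk.1.2).mp hk.2⟩
    · intro k hk
      simp only [mem_filter, mem_Icc] at hk ⊢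
      refine ⟨⟨by omega, by omega⟩, ?_⟩
      have h' := hrefl (n - k) (by omega) (by omega)
      have hnk : n - (n - k) = k := by omega
      rw [hnk] at h'
      exact h'.mpr hk.2
    · intro k hk
      simp only [mem_filter, mem_Icc] at hk
      omega
    · intro k hk
      simp only [mem_filter, mem_Icc] at hk
      omega
  omega
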